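/- Let X = {-1,1}^ℕ (viewing potentials on the bilateral space), A(x) = Σ_{j≥1} a_j x_j with Σ_k Σ_{n≥k} |a_n| < ∞, and define W(y|x) = Σ_{i≥1} (x_i + y_i) α_i where α_i = Σ_{j>i} a_j. Then W is an involution kernel for A with A* = A: for every a ∈ {-1,1}, x ∈ {-1,1}^ℕ and y in the backward sequence space, A(ay) + W(ya|x) = A(ax) + W(y|ax). -/

import Mathlib

/-- The symbolic space `{-1,1}^ℕ`, with `true ↔ 1` and `false ↔ -1`.
We also use it (with reversed reading of the indices) for the space `X*`
of backward sequences `(…, y₂, y₁)`, the coordinate `y 0` being `y₁`. -/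
abbrev Xsp : Type := ℕ → Bool

/-- The spin value of a symbol. -/
noncomputable def spin (b : Bool) : ℝ := if b then 1 else -1

/-- Prepending a symbol: `consX a x = (a, x₀, x₁, …)`.  For a backward
sequence `y`, `consX a y` represents `(…, y₂, y₁, a)`. -/
def consX (a : Bool) (x : Xsp) : Xsp := fun n =>
  match n with
  | 0 => a
  | Nat.succ k => x k

/-- The potential `A(x) = Σ_j a_j x_j`. -/
noncomputable def prodPot (a : ℕ → ℝ) (x : Xsp) : ℝ := ∑' j : ℕ, a j * spin (x j)

/-- `α_i = Σ_{j > i} a_j`. -/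
noncomputable def alphaC (a : ℕ → ℝ) (i : ℕ) : ℝ := ∑' j : ℕ, a (j + i + 1)

/-- The involution kernel `W(y|x) = Σ_i (x_i + y_i) α_i`. -/
noncomputable def Wker (a : ℕ → ℝ) (y x : Xsp) : ℝ :=
  ∑' i : ℕ, (spin (x i) + spin (y i)) * alphaC a i

set_option maxHeartbeats 1000000

lemma abs_spin (b : Bool) : |spin b| = 1 := by
  cases b <;> simp [spin]

/-- `W` is an involution kernel for `A` with `A* = A`:
`A(ay) + W(ya|x) = A(ax) + W(y|ax)`. -/
theorem involution_kernel_product_potential (a : ℕ → ℝ)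
    (hsum : Summable fun k : ℕ => ∑' n : ℕ, |a (n + k)|)
    (s : Bool) (x y : Xsp) :
    prodPot a (consX s y) + Wker a (consX s y) x =
      prodPot a (consX s x) + Wker a y (consX s x) := by
  by_cases hA : Summable fun n => |a n|
  · -- summable case
    have ha : Summable a := summable_abs_iff.mp hA
    have hashift : ∀ k : ℕ, Summable fun j => a (j + k) :=
      fun k => (summable_nat_add_iff k).mpr ha
    have hAshift : ∀ k : ℕ, Summable fun j => |a (j + k)| :=
      fun k => (summable_nat_add_iff k).mpr hA
    -- T k = ∑' n, |a (n+k)|, summable in k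
    have hT : Summable fun i : ℕ => ∑' n : ℕ, |a (n + (i + 1))| :=
      (summable_nat_add_iff 1).mpr hsum
    have halpha_le : ∀ i : ℕ, |alphaC a i| ≤ ∑' n : ℕ, |a (n + (i + 1))| := by
      intro i
      have := norm_tsum_le_tsum_norm (f := fun j => a (j + i + 1))
        (by simpa [Nat.add_assoc] using hAshift (i + 1))
      simpa [alphaC, Real.norm_eq_abs, Nat.add_assoc] using this
    have hmul : ∀ (c : ℕ → ℝ), (∀ i, |c i| ≤ 2) →
        Summable fun i => c i * alphaC a i := by
      intro c hc
      apply summable_abs_iff.mp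
      refine Summable.of_nonneg_of_le (fun i => abs_nonneg _) ?_ (hT.mul_left 2)
      intro i
      rw [abs_mul]
      calc |c i| * |alphaC a i| ≤ 2 * |alphaC a i| := by
            apply mul_le_mul_of_nonneg_right (hc i) (abs_nonneg _)
        _ ≤ 2 * ∑' n : ℕ, |a (n + (i + 1))| := by
            apply mul_le_mul_of_nonneg_left (halpha_le i) (by norm_num)
    have halphaS : Summable fun i => alphaC a i := by
      have := hmul (fun _ => 1) (by intro i; norm_num)
      simpa using this
    have hspin_mul : ∀ (z : Xsp), Summable fun i => spin (z i) * alphaC a i := by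
      intro z
      exact hmul (fun i => spin (z i)) (fun i => by rw [abs_spin]; norm_num)
    have hspin_mul' : ∀ (z : Xsp), Summable fun i => a (i + 1) * spin (z i) := by
      intro z
      apply summable_abs_iff.mp
      refine Summable.of_nonneg_of_le (fun i => abs_nonneg _) ?_ (hAshift 1)
      intro i; rw [abs_mul, abs_spin, mul_one]
    -- alpha recursion
    have harec : ∀ k : ℕ, alphaC a k = a (k + 1) + alphaC a (k + 1) := by
      intro k
      have h := Summable.tsum_eq_zero_add (hashift (k + 1))
      simp only [zero_add] at h
      calc alphaC a k = ∑' j : ℕ, a (j + (k + 1)) := rfl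
        _ = a (k + 1) + ∑' j : ℕ, a (j + 1 + (k + 1)) := h
        _ = a (k + 1) + alphaC a (k + 1) := by
            unfold alphaC; congr 2; ext j; ring_nf
    -- split prodPot
    have hprod : ∀ z : Xsp, prodPot a (consX s z) =
        a 0 * spin s + ∑' j : ℕ, a (j + 1) * spin (z j) := by
      intro z
      have hs : Summable fun j => a j * spin ((consX s z) j) := by
        apply summable_abs_iff.mp
        refine Summable.of_nonneg_of_le (fun i => abs_nonneg _) ?_ hA
        intro i; rw [abs_mul, abs_spin, mul_one]
      have h := Summable.tsum_eq_zero_add hs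
      simpa [prodPot, consX] using h
    -- split Wker
    have hW : ∀ z w : Xsp, Wker a (consX s z) w =
        (spin (w 0) + spin s) * alphaC a 0 +
          ∑' i : ℕ, (spin (w (i + 1)) + spin (z i)) * alphaC a (i + 1) := by
      intro z w
      have hs : Summable fun i => (spin (w i) + spin ((consX s z) i)) * alphaC a i :=
        hmul _ (fun i => by
          calc |spin (w i) + spin ((consX s z) i)| ≤ |spin (w i)| + |spin _| :=
                abs_add_le _ _
            _ ≤ 2 := by simp only [abs_spin]; norm_num)
      have h := Summable.tsum_eq_zero_add hs
      simpa [Wker, consX] using h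
    have hW' : Wker a y (consX s x) =
        (spin s + spin (y 0)) * alphaC a 0 +
          ∑' i : ℕ, (spin (x i) + spin (y (i + 1))) * alphaC a (i + 1) := by
      have hs : Summable fun i => (spin ((consX s x) i) + spin (y i)) * alphaC a i :=
        hmul _ (fun i => by
          calc |spin ((consX s x) i) + spin (y i)| ≤ |spin _| + |spin (y i)| :=
                abs_add_le _ _
            _ ≤ 2 := by simp only [abs_spin]; norm_num)
      have h := Summable.tsum_eq_zero_add hs
      simpa [Wker, consX] using h
    rw [hprod y, hprod x, hW y x, hW']
    -- Now reduce everything to tsums of α_i * spins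
    -- key: ∑' i, c(i) terms
    have key : ∀ f g : Xsp,
        (∑' j : ℕ, a (j + 1) * spin (g j)) + spin (f 0) * alphaC a 0 +
          ∑' i : ℕ, (spin (f (i + 1)) + spin (g i)) * alphaC a (i + 1) =
        (∑' i : ℕ, spin (g i) * alphaC a i) + ∑' i : ℕ, spin (f i) * alphaC a i := by
      intro f g
      have h1 : Summable fun i => spin (g i) * alphaC a i := hspin_mul g
      have h2 : Summable fun i => spin (f (i + 1)) * alphaC a (i + 1) :=
        (summable_nat_add_iff 1).mpr (hspin_mul f)
      have hsplit : ∀ i : ℕ, (spin (f (i + 1)) + spin (g i)) * alphaC a (i + 1) =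
          (spin (g i) * alphaC a i - a (i + 1) * spin (g i)) +
            spin (f (i + 1)) * alphaC a (i + 1) := by
        intro i
        rw [harec i]; ring
      rw [tsum_congr hsplit, Summable.tsum_add (by
          exact (h1.sub (hspin_mul' g))) h2]
      rw [Summable.tsum_sub h1 (hspin_mul' g)]
      have hf : ∑' i : ℕ, spin (f i) * alphaC a i =
          spin (f 0) * alphaC a 0 + ∑' i : ℕ, spin (f (i + 1)) * alphaC a (i + 1) := by
        have h := Summable.tsum_eq_zero_add (hspin_mul f)
        simpa using h
      rw [hf]; ring
    have L := key x y
    have R := key y x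
    have : (∑' i : ℕ, spin (y i) * alphaC a i) + ∑' i : ℕ, spin (x i) * alphaC a i =
        (∑' i : ℕ, spin (x i) * alphaC a i) + ∑' i : ℕ, spin (y i) * alphaC a i := by
      ring
    rw [show (∑' i : ℕ, (spin (x i) + spin (y (i + 1))) * alphaC a (i + 1)) =
        ∑' i : ℕ, (spin (y (i + 1)) + spin (x i)) * alphaC a (i + 1) from
      tsum_congr (fun i => by ring)]
    linarith [L, R, this]
  · -- degenerate case: everything is 0
    have halpha : ∀ i : ℕ, alphaC a i = 0 := by
      intro i
      apply tsum_eq_zero_of_not_summable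
      intro h
      exact hA (summable_abs_iff.mpr ((summable_nat_add_iff (i + 1)).mp
        (by simpa [Nat.add_assoc] using h)))
    have hprod : ∀ z : Xsp, prodPot a z = 0 := by
      intro z
      apply tsum_eq_zero_of_not_summable
      intro h
      apply hA
      have : Summable fun j => |a j * spin (z j)| := h.abs
      simpa [abs_mul, abs_spin] using this
    have hW : ∀ z w : Xsp, Wker a z w = 0 := by
      intro z w
      unfold Wker
      simp [halpha]
    rw [hprod, hprod, hW, hW]
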